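/- The function h(β) := ζ₁(β/α₀)^{ζ₁−1} − ζ₂(β/α₀)^{ζ₂−1}, defined for β ∈ [α₀, ∞), attains a unique global maximum at the point β₀* := α₀ · (ζ₁(ζ₁−1)/(ζ₂(ζ₂−1)))^{1/(ζ₂−ζ₁)}, and moreover β₀* > α₀. -/

import Mathlib

open Real Set

set_option maxHeartbeats 1000000

/-- the denominator function `h(β) = ζ₁(β/α₀)^{ζ₁−1} − ζ₂(β/α₀)^{ζ₂−1}`
attains a unique global maximum on `[α₀, ∞)` at `β₀* > α₀`. -/
theorem stmt_5 (μA μL δ σA σL ρ ζ₁ ζ₂ α₀ β₀ : ℝ)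
    (hσA : 0 < σA) (hσL : 0 < σL) (hρ₁ : -1 < ρ) (hρ₂ : ρ < 1)
    (hμ : μL < μA) (hδ : μA < δ)
    (hroot₁ : (1 / 2) * (σA ^ 2 + σL ^ 2 - 2 * ρ * σA * σL) * ζ₁ * (ζ₁ - 1)
      + (μA - μL) * ζ₁ + (μL - δ) = 0)
    (hroot₂ : (1 / 2) * (σA ^ 2 + σL ^ 2 - 2 * ρ * σA * σL) * ζ₂ * (ζ₂ - 1)
      + (μA - μL) * ζ₂ + (μL - δ) = 0)
    (hζlt : ζ₁ < ζ₂) (hζ₁ : ζ₁ < 0) (hζ₂ : 1 < ζ₂)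
    (hα₀ : 0 < α₀)
    (hβ₀ : β₀ = α₀ * (ζ₁ * (ζ₁ - 1) / (ζ₂ * (ζ₂ - 1))) ^ (1 / (ζ₂ - ζ₁))) :
    α₀ < β₀ ∧
    ∀ β : ℝ, α₀ ≤ β → β ≠ β₀ →
      ζ₁ * (β / α₀) ^ (ζ₁ - 1) - ζ₂ * (β / α₀) ^ (ζ₂ - 1)
        < ζ₁ * (β₀ / α₀) ^ (ζ₁ - 1) - ζ₂ * (β₀ / α₀) ^ (ζ₂ - 1) := by
  have hσ2pos : 0 < σA ^ 2 + σL ^ 2 - 2 * ρ * σA * σL := by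
    nlinarith [sq_nonneg (σA - σL), mul_pos hσA hσL]
  set A := ζ₁ * (ζ₁ - 1) with hA
  set B := ζ₂ * (ζ₂ - 1) with hB
  have hApos : 0 < A := mul_pos_of_neg_of_neg hζ₁ (by linarith)
  have hBpos : 0 < B := mul_pos (by linarith) (by linarith)
  have hexp : 0 < ζ₂ - ζ₁ := sub_pos.mpr hζlt
  have hσ2AB : (σA ^ 2 + σL ^ 2 - 2 * ρ * σA * σL) * (A - B)
      = 2 * (μA - μL) * (ζ₂ - ζ₁) := by
    rw [hA, hB]; linear_combination 2 * hroot₁ - 2 * hroot₂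
  have hAB : B < A := by
    have h2 : 0 < (σA ^ 2 + σL ^ 2 - 2 * ρ * σA * σL) * (A - B) := by
      rw [hσ2AB]
      have := mul_pos (sub_pos.mpr hμ) hexp
      nlinarith
    nlinarith [h2, hσ2pos]
  set c := (A / B) ^ (1 / (ζ₂ - ζ₁)) with hc
  have hABdiv : 1 < A / B := (one_lt_div hBpos).mpr hAB
  have hc1 : 1 < c :=
    (Real.one_lt_rpow_iff_of_pos (by positivity)).mpr (Or.inl ⟨hABdiv, by positivity⟩)
  have hcpow : c ^ (ζ₂ - ζ₁) = A / B := by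
    rw [hc, ← Real.rpow_mul (by positivity), one_div_mul_cancel hexp.ne', Real.rpow_one]
  have hβ₀c : β₀ = α₀ * c := hβ₀
  have hαβ : α₀ < β₀ := by
    rw [hβ₀c]; nlinarith
  refine ⟨hαβ, ?_⟩
  set f : ℝ → ℝ := fun x => ζ₁ * x ^ (ζ₁ - 1) - ζ₂ * x ^ (ζ₂ - 1) with hf
  -- derivative of f
  have hderiv : ∀ x : ℝ, 0 < x →
      HasDerivAt f (x ^ (ζ₁ - 1 - 1) * (A - B * x ^ (ζ₂ - ζ₁))) x := by
    intro x hx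
    have h1 := (Real.hasDerivAt_rpow_const (x := x) (p := ζ₁ - 1) (Or.inl hx.ne')).const_mul ζ₁
    have h2 := (Real.hasDerivAt_rpow_const (x := x) (p := ζ₂ - 1) (Or.inl hx.ne')).const_mul ζ₂
    have h3 := h1.sub h2
    refine h3.congr_deriv ?_
    have hsplit : x ^ (ζ₂ - 1 - 1) = x ^ (ζ₁ - 1 - 1) * x ^ (ζ₂ - ζ₁) := by
      rw [← Real.rpow_add hx]; ring_nf
    rw [hsplit, hA, hB]; ring
  have hcont : ContinuousOn f {x : ℝ | 0 < x} := by
    intro x hx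
    exact ((continuousAt_const.mul
        (Real.continuousAt_rpow_const x (ζ₁ - 1) (Or.inl (ne_of_gt hx)))).sub
      (continuousAt_const.mul
        (Real.continuousAt_rpow_const x (ζ₂ - 1) (Or.inl (ne_of_gt hx))))).continuousWithinAt
  have hmono : StrictMonoOn f (Icc 1 c) := by
    apply strictMonoOn_of_deriv_pos (convex_Icc 1 c)
    · exact hcont.mono (fun x hx => lt_of_lt_of_le one_pos hx.1)
    · intro x hx
      rw [interior_Icc] at hx
      have hx0 : 0 < x := lt_trans one_pos hx.1
      rw [(hderiv x hx0).deriv]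
      have hlt : x ^ (ζ₂ - ζ₁) < A / B := by
        rw [← hcpow]
        exact Real.rpow_lt_rpow hx0.le hx.2 hexp
      have : B * x ^ (ζ₂ - ζ₁) < A := by
        rw [lt_div_iff₀ hBpos] at hlt; linarith [hlt]
      have hxp : 0 < x ^ (ζ₁ - 1 - 1) := Real.rpow_pos_of_pos hx0 _
      exact mul_pos hxp (by linarith)
  have hanti : StrictAntiOn f (Ici c) := by
    apply strictAntiOn_of_deriv_neg (convex_Ici c)
    · exact hcont.mono (fun x hx => lt_of_lt_of_le (lt_trans one_pos hc1) hx)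
    · intro x hx
      rw [interior_Ici] at hx
      have hx0 : 0 < x := lt_trans (lt_trans one_pos hc1) hx
      rw [(hderiv x hx0).deriv]
      have hlt : A / B < x ^ (ζ₂ - ζ₁) := by
        rw [← hcpow]
        exact Real.rpow_lt_rpow (by positivity) hx hexp
      have : A < B * x ^ (ζ₂ - ζ₁) := by
        rw [div_lt_iff₀ hBpos] at hlt; linarith [hlt]
      have hxp : 0 < x ^ (ζ₁ - 1 - 1) := Real.rpow_pos_of_pos hx0 _
      exact mul_neg_of_pos_of_neg hxp (by linarith)
  intro β hβ hne
  have hβ₀α : β₀ / α₀ = c := by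
    rw [hβ₀c]; field_simp
  have hx1 : 1 ≤ β / α₀ := (one_le_div hα₀).mpr hβ
  have hxc : β / α₀ ≠ c := by
    intro h
    apply hne
    rw [hβ₀c, ← h]; field_simp
  rw [hβ₀α]
  show f (β / α₀) < f c
  rcases lt_or_gt_of_ne hxc with h | h
  · exact hmono ⟨hx1, h.le⟩ ⟨hc1.le, le_refl c⟩ h
  · exact hanti (le_refl c) (le_of_lt h) h
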